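/- For ρ > 0, m ∈ ℕ, define Ξ_ρ^m(s) = ∑_{l=0}^m Ξ_ρ(s+l) where Ξ_ρ(s) = ∫₀^∞ t^(s/2-1) Ψ(t) e^{-ρ log²(t)} dt. Then Ξ_ρ^m(s) - Ξ_ρ^m(1-m-s) = (1/2)·√(π/ρ)·( exp((s-1)²/(16ρ)) - exp((s+m)²/(16ρ)) ) for all s ∈ ℂ. -/

import Mathlib

open MeasureTheory Real Filter

noncomputable def Psi (t : ℝ) : ℝ := ∑' n : ℕ, Real.exp (-Real.pi * ((n : ℝ) + 1) ^ 2 * t)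

noncomputable def Xi (ρ : ℝ) (s : ℂ) : ℂ :=
  ∫ t in Set.Ioi (0:ℝ), (t : ℂ) ^ (s / 2 - 1) * (Psi t : ℂ) * (Real.exp (-ρ * Real.log t ^ 2) : ℂ)

open Complex Set HurwitzZeta

lemma summable_inv_sq : Summable (fun n : ℕ ↦ 1 / ((n:ℝ)+1)^2) := by
  have h : Summable (fun n : ℕ ↦ 1 / ((n:ℝ))^2) := by
    exact_mod_cast Real.summable_one_div_nat_pow.mpr one_lt_two
  have := (summable_nat_add_iff 1).mpr h
  refine this.congr fun n ↦ by push_cast; ring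

noncomputable def Kc : ℝ := ∑' n : ℕ, 1 / ((n:ℝ)+1)^2

lemma term_le {t : ℝ} (ht : 0 < t) (n : ℕ) :
    rexp (-π * ((n:ℝ)+1)^2 * t) ≤ 1/(π*t) * (1 / ((n:ℝ)+1)^2) := by
  have hn : (0:ℝ) < ((n:ℝ)+1)^2 := by positivity
  have hy : (0:ℝ) < π * ((n:ℝ)+1)^2 * t := by positivity
  have h1 : π * ((n:ℝ)+1)^2 * t ≤ rexp (π * ((n:ℝ)+1)^2 * t) :=
    le_trans (by linarith) (Real.add_one_le_exp _)
  have h2 : rexp (-(π * ((n:ℝ)+1)^2 * t)) ≤ 1/(π * ((n:ℝ)+1)^2 * t) := by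
    rw [Real.exp_neg]
    rw [one_div]
    exact inv_anti₀ hy h1
  calc rexp (-π * ((n:ℝ)+1)^2 * t) = rexp (-(π * ((n:ℝ)+1)^2 * t)) := by ring_nf
  _ ≤ 1/(π * ((n:ℝ)+1)^2 * t) := h2
  _ = 1/(π*t) * (1 / ((n:ℝ)+1)^2) := by field_simp

lemma psi_summable {t : ℝ} (ht : 0 < t) :
    Summable fun n : ℕ ↦ rexp (-π * ((n:ℝ)+1)^2 * t) := by
  refine Summable.of_nonneg_of_le (fun n ↦ (Real.exp_pos _).le) (term_le ht)
    ((summable_inv_sq.mul_left (1/(π*t))))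

lemma psi_nonneg (t : ℝ) : 0 ≤ Psi t := tsum_nonneg fun n ↦ (Real.exp_pos _).le

lemma psi_le {t : ℝ} (ht : 0 < t) : Psi t ≤ 1/(π*t) * Kc := by
  have := Summable.tsum_le_tsum (term_le ht) (psi_summable ht) (summable_inv_sq.mul_left (1/(π*t)))
  simpa [Psi, Kc, tsum_mul_left] using this

lemma evenKernel_zero {t : ℝ} (ht : 0 < t) : evenKernel 0 t = 1 + 2 * Psi t := by
  have him : 0 < Complex.im (Complex.I * t) := by
    simp [Complex.I_mul_im, ht]
  have h1 : ((evenKernel (↑(0:ℝ)) t : ℝ) : ℂ) = jacobiTheta (Complex.I * t) := by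
    rw [evenKernel_def 0 t, jacobiTheta_eq_jacobiTheta₂]
    push_cast
    simp
  have h2 : jacobiTheta (Complex.I * t) = 1 + 2 * (Psi t : ℂ) := by
    rw [jacobiTheta_eq_tsum_nat him]
    have hsum : (Psi t : ℂ) = ∑' n : ℕ, cexp (↑π * Complex.I * ((n:ℂ) + 1) ^ 2 * (Complex.I * t)) := by
      rw [Psi, Complex.ofReal_tsum]
      refine tsum_congr fun n ↦ ?_
      rw [Complex.ofReal_exp]
      congr 1
      rw [show (π:ℂ) * Complex.I * ((n:ℂ)+1)^2 * (Complex.I * t)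
          = (π:ℂ)*((n:ℂ)+1)^2*(t:ℂ)*(Complex.I*Complex.I) by ring, Complex.I_mul_I]
      push_cast
      ring
    rw [← hsum]
  have : ((evenKernel (↑(0:ℝ)) t : ℝ) : ℂ) = ((1 + 2 * Psi t : ℝ) : ℂ) := by
    rw [h1, h2]; push_cast; ring
  have := Complex.ofReal_inj.mp this
  simpa using this

lemma psi_exp_neg (x : ℝ) :
    Psi (rexp (-x)) = rexp (x/2) * Psi (rexp x) + (rexp (x/2) - 1)/2 := by
  have h := evenKernel_functional_equation 0 (rexp x)
  rw [← evenKernel_eq_cosKernel_of_zero] at h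
  have h2 : (rexp x) ^ ((1:ℝ)/2) = rexp (x/2) := by
    rw [Real.rpow_def_of_pos (Real.exp_pos x), Real.log_exp]
    ring_nf
  have h3 : 1 / rexp x = rexp (-x) := by rw [Real.exp_neg, one_div]
  rw [h2, h3] at h
  rw [evenKernel_zero (Real.exp_pos x), evenKernel_zero (Real.exp_pos (-x))] at h
  have he : (0:ℝ) < rexp (x/2) := Real.exp_pos _
  field_simp at h ⊢
  nlinarith [Real.exp_pos (x/2)]

lemma psi_exp_cont : Continuous fun x : ℝ ↦ Psi (rexp x) := by
  have h1 : Continuous fun x : ℝ ↦ evenKernel 0 (rexp x) :=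
    (continuousOn_evenKernel 0).comp_continuous Real.continuous_exp fun x ↦ Real.exp_pos x
  have h2 : (fun x : ℝ ↦ Psi (rexp x)) = fun x ↦ (evenKernel 0 (rexp x) - 1)/2 := by
    ext x
    rw [evenKernel_zero (Real.exp_pos x)]
    ring
  rw [h2]
  fun_prop

variable {ρ : ℝ}

lemma quad_form (c : ℂ) : ∀ x : ℝ, cexp (c*x) * ((rexp (-ρ*x^2) : ℝ) : ℂ)
    = cexp (-(ρ:ℂ)*x^2 + c*x + 0) := by
  intro x
  rw [Complex.ofReal_exp, ← Complex.exp_add]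
  congr 1
  push_cast
  ring

lemma core_integrable (hρ : 0 < ρ) (c : ℂ) :
    Integrable fun x : ℝ ↦ cexp (c*x) * ((rexp (-ρ*x^2) : ℝ) : ℂ) := by
  simp_rw [quad_form (ρ:=ρ) c]
  exact integrable_cexp_quadratic (by simpa using hρ) c 0

lemma core_integral (hρ : 0 < ρ) (c : ℂ) :
    ∫ x : ℝ, cexp (c*x) * ((rexp (-ρ*x^2) : ℝ) : ℂ)
      = (Real.sqrt (π/ρ) : ℂ) * cexp (c^2/(4*ρ)) := by
  simp_rw [quad_form (ρ:=ρ) c]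
  rw [integral_cexp_quadratic (show (-(ρ:ℂ)).re < 0 by simpa using hρ) c 0]
  congr 1
  · rw [show (π:ℂ) / -(-(ρ:ℂ)) = ((π/ρ : ℝ) : ℂ) by push_cast; ring,
      Real.sqrt_eq_rpow, Complex.ofReal_cpow (by positivity)]
    norm_num
  · congr 1
    have : (ρ:ℂ) ≠ 0 := by exact_mod_cast hρ.ne'
    field_simp
    ring

lemma gauss_real (hρ : 0 < ρ) (b : ℝ) : Integrable fun x : ℝ ↦ rexp (-ρ*x^2 + b*x) := by
  have h := (core_integrable hρ (b:ℂ)).norm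
  refine h.congr (Eventually.of_forall fun x ↦ ?_)
  show ‖cexp (↑b * ↑x) * ((rexp (-ρ * x ^ 2) : ℝ) : ℂ)‖ = _
  rw [quad_form (ρ:=ρ) (b:ℂ) x, Complex.norm_exp]
  have : (-(ρ:ℂ)*x^2 + b*x + 0).re = -ρ * x^2 + b*x := by
    simp only [Complex.add_re, Complex.mul_re, Complex.neg_re, Complex.ofReal_re,
      Complex.ofReal_im, Complex.zero_re, ← Complex.ofReal_pow]
    ring
  rw [this]

lemma main_integrable (hρ : 0 < ρ) (c : ℂ) :
    Integrable fun x : ℝ ↦ cexp (c*x) * ((Psi (rexp x) : ℝ) : ℂ) * ((rexp (-ρ*x^2) : ℝ) : ℂ) := by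
  have hcont : Continuous fun x : ℝ ↦ cexp (c*x) * ((Psi (rexp x) : ℝ) : ℂ)
      * ((rexp (-ρ*x^2) : ℝ) : ℂ) := by
    apply Continuous.mul
    apply Continuous.mul
    · exact Complex.continuous_exp.comp (by fun_prop)
    · exact Complex.continuous_ofReal.comp psi_exp_cont
    · fun_prop
  refine ((gauss_real hρ (c.re - 1)).const_mul (Kc/π)).mono' hcont.aestronglyMeasurable
    (Eventually.of_forall fun x ↦ ?_)
  have hK : 0 ≤ Kc := tsum_nonneg fun n ↦ by positivity
  have h1 : ‖cexp (c*x)‖ = rexp (c.re * x) := by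
    rw [Complex.norm_exp]
    congr 1
    simp [Complex.mul_re]
  have h2 : Psi (rexp x) ≤ 1/(π * rexp x) * Kc := psi_le (Real.exp_pos x)
  rw [norm_mul, norm_mul, h1, Complex.norm_real, Complex.norm_real,
    Real.norm_of_nonneg (psi_nonneg _), Real.norm_of_nonneg (Real.exp_pos _).le]
  calc rexp (c.re*x) * Psi (rexp x) * rexp (-ρ*x^2)
      ≤ rexp (c.re*x) * (1/(π * rexp x) * Kc) * rexp (-ρ*x^2) := by
        apply mul_le_mul_of_nonneg_right _ (Real.exp_pos _).le
        exact mul_le_mul_of_nonneg_left h2 (Real.exp_pos _).le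
    _ = Kc/π * (rexp (c.re*x) * (rexp x)⁻¹ * rexp (-ρ*x^2)) := by
        field_simp
    _ = Kc/π * rexp (-ρ*x^2 + (c.re-1)*x) := by
        rw [← Real.exp_neg, ← Real.exp_add, ← Real.exp_add]
        ring_nf

lemma exp_subst (g : ℝ → ℂ) :
    ∫ t in Set.Ioi (0:ℝ), g t = ∫ x : ℝ, rexp x • g (rexp x) := by
  have hd : ∀ x ∈ (univ : Set ℝ), HasDerivWithinAt Real.exp (rexp x) univ x :=
    fun x _ ↦ (Real.hasDerivAt_exp x).hasDerivWithinAt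
  have hinj : InjOn Real.exp univ := Real.exp_injective.injOn
  have h := integral_image_eq_integral_abs_deriv_smul MeasurableSet.univ hd hinj g
  rw [image_univ, Real.range_exp] at h
  rw [h, Measure.restrict_univ]
  congr 1
  ext x
  rw [abs_of_pos (Real.exp_pos x)]

lemma rexp_cpow (x : ℝ) (w : ℂ) : ((rexp x : ℝ) : ℂ) ^ w = cexp (w * x) := by
  rw [Complex.ofReal_exp, Complex.cpow_def_of_ne_zero (Complex.exp_ne_zero _),
    Complex.log_exp (by simpa using Real.pi_pos) (by simp [Real.pi_nonneg])]
  rw [mul_comm]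

lemma Xi_eq (ρ : ℝ) (s : ℂ) :
    Xi ρ s = ∫ x : ℝ, cexp (s/2 * x) * ((Psi (rexp x) : ℝ) : ℂ) * ((rexp (-ρ*x^2) : ℝ) : ℂ) := by
  rw [Xi, exp_subst]
  congr 1
  ext x
  rw [rexp_cpow, Real.log_exp, Complex.real_smul, Complex.ofReal_exp, ← mul_assoc, ← mul_assoc,
    ← Complex.exp_add]
  have h1 : (x:ℂ) + (s/2 - 1) * x = s/2 * x := by ring
  rw [h1]

lemma Xi_FE {ρ : ℝ} (hρ : 0 < ρ) (s : ℂ) :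
    Xi ρ s - Xi ρ (1 - s)
      = 1/2 * (Real.sqrt (π/ρ) : ℂ)
        * (cexp ((s-1)^2/(16*ρ)) - cexp (s^2/(16*ρ))) := by
  have hXi1s : Xi ρ (1-s)
      = Xi ρ s + (1/2 : ℂ) * ((∫ x : ℝ, cexp (s/2*x) * ((rexp (-ρ*x^2) : ℝ) : ℂ))
          - ∫ x : ℝ, cexp ((s-1)/2*x) * ((rexp (-ρ*x^2) : ℝ) : ℂ)) := by
    rw [Xi_eq ρ (1-s), ← integral_neg_eq_self]
    have hpt : ∀ x : ℝ,
        cexp ((1-s)/2 * (-x:ℝ)) * ((Psi (rexp (-x)) : ℝ) : ℂ) * ((rexp (-ρ*(-x:ℝ)^2) : ℝ) : ℂ)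
        = cexp (s/2*x) * ((Psi (rexp x) : ℝ) : ℂ) * ((rexp (-ρ*x^2) : ℝ) : ℂ)
          + (1/2 : ℂ) * (cexp (s/2*x) * ((rexp (-ρ*x^2) : ℝ) : ℂ)
            - cexp ((s-1)/2*x) * ((rexp (-ρ*x^2) : ℝ) : ℂ)) := by
      intro x
      rw [psi_exp_neg x]
      push_cast
      have e1 : cexp ((1-s)/2 * -(x:ℂ)) * cexp ((x:ℂ)/2) = cexp (s/2 * (x:ℂ)) := by
        rw [← Complex.exp_add]
        congr 1
        ring
      have e2 : cexp ((1-s)/2 * -(x:ℂ)) = cexp ((s-1)/2 * (x:ℂ)) := by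
        congr 1
        ring
      simp only [neg_sq]
      linear_combination ((Psi (rexp x) : ℂ) * cexp (-(ρ:ℂ)*(x:ℂ)^2)
          + cexp (-(ρ:ℂ)*(x:ℂ)^2)/2) * e1 - (cexp (-(ρ:ℂ)*(x:ℂ)^2)/2) * e2
    rw [show (fun x : ℝ ↦ cexp ((1-s)/2 * ((-x:ℝ):ℂ)) * ((Psi (rexp (-x)) : ℝ) : ℂ)
          * ((rexp (-ρ*(-x:ℝ)^2) : ℝ) : ℂ))
        = fun x : ℝ ↦ cexp (s/2*x) * ((Psi (rexp x) : ℝ) : ℂ) * ((rexp (-ρ*x^2) : ℝ) : ℂ)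
          + (1/2 : ℂ) * (cexp (s/2*x) * ((rexp (-ρ*x^2) : ℝ) : ℂ)
            - cexp ((s-1)/2*x) * ((rexp (-ρ*x^2) : ℝ) : ℂ)) from funext hpt]
    have hint2 : Integrable (fun x : ℝ ↦ (1/2:ℂ) * (cexp (s/2*x) * ((rexp (-ρ*x^2) : ℝ) : ℂ)
        - cexp ((s-1)/2*x) * ((rexp (-ρ*x^2) : ℝ) : ℂ))) := by
      apply Integrable.const_mul
      exact (core_integrable hρ (s/2)).sub (core_integrable hρ ((s-1)/2))
    rw [integral_add (main_integrable hρ (s/2)) hint2]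
    rw [MeasureTheory.integral_const_mul, integral_sub (core_integrable hρ (s/2)) (core_integrable hρ ((s-1)/2)),
      ← Xi_eq ρ s]
  rw [hXi1s, core_integral hρ (s/2), core_integral hρ ((s-1)/2)]
  have hρC : (ρ:ℂ) ≠ 0 := by exact_mod_cast hρ.ne'
  have q1 : (s/2)^2/(4*(ρ:ℂ)) = s^2/(16*ρ) := by rw [div_pow, div_div, show (2:ℂ)^2*(4*(ρ:ℂ)) = 16*ρ by ring]
  have q2 : ((s-1)/2)^2/(4*(ρ:ℂ)) = (s-1)^2/(16*ρ) := by rw [div_pow, div_div, show (2:ℂ)^2*(4*(ρ:ℂ)) = 16*ρ by ring]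
  rw [q1, q2]
  ring

theorem stmt5 (ρ : ℝ) (hρ : 0 < ρ) (m : ℕ) (s : ℂ) :
    (∑ l ∈ Finset.range (m + 1), Xi ρ (s + (l : ℂ)))
      - (∑ l ∈ Finset.range (m + 1), Xi ρ (1 - (m : ℂ) - s + (l : ℂ)))
      = (1/2) * (Real.sqrt (Real.pi / ρ) : ℂ) *
        (Complex.exp ((s - 1) ^ 2 / (16 * (ρ : ℂ)))
          - Complex.exp ((s + (m : ℂ)) ^ 2 / (16 * (ρ : ℂ)))) := by
  have h2 : ∑ l ∈ Finset.range (m+1), Xi ρ (1 - (m:ℂ) - s + (l:ℂ))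
      = ∑ l ∈ Finset.range (m+1), Xi ρ (1 - (s + (l:ℂ))) := by
    rw [← Finset.sum_range_reflect]
    refine Finset.sum_congr rfl fun l hl ↦ ?_
    congr 1
    have hlm : l ≤ m := Nat.lt_succ_iff.mp (Finset.mem_range.mp hl)
    rw [show m + 1 - 1 - l = m - l from by omega, Nat.cast_sub hlm]
    ring
  rw [h2, ← Finset.sum_sub_distrib]
  set g : ℕ → ℂ := fun l ↦ 1/2 * (Real.sqrt (π/ρ) : ℂ) * cexp ((s + (l:ℂ) - 1)^2/(16*(ρ:ℂ)))
    with hg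
  calc ∑ l ∈ Finset.range (m+1), (Xi ρ (s + (l:ℂ)) - Xi ρ (1 - (s + (l:ℂ))))
      = ∑ l ∈ Finset.range (m+1), (g l - g (l+1)) := by
        refine Finset.sum_congr rfl fun l _ ↦ ?_
        rw [Xi_FE hρ (s + (l:ℂ)), hg]
        simp only []
        push_cast
        ring_nf
    _ = g 0 - g (m+1) := Finset.sum_range_sub' g (m+1)
    _ = _ := by
        rw [hg]
        simp only []
        push_cast
        ring_nf
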